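/- Let G be a countable group acting on a countable set X with subexponential growth of orbits. Then there exists a distance d : X × X → ℕ such that all balls are finite, for some (equivalently any) basepoint x₀ the function n ↦ |B_{(X,d)}(x₀; n)| has subexponential growth, and the G-action has bounded displacement: sup_{x∈X} d(x, gx) < ∞ for every g ∈ G. -/

import Mathlib

open Filter

section ReachAux

variable {X : Type*} {E : X → X → ℕ → Prop}

inductive Reach (E : X → X → ℕ → Prop) : ℕ → X → X → Prop
  | refl (x : X) : Reach E 0 x x
  | step {x y z : X} {m n : ℕ} : E x y m → Reach E n y z → Reach E (m + n) x z

theorem Reach.trans {m n : ℕ} {x y z : X} (h : Reach E m x y) (h' : Reach E n y z) :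
    Reach E (m + n) x z := by
  induction h with
  | refl x => simpa using h'
  | step e _ ih => rw [Nat.add_assoc]; exact Reach.step e (ih h')

theorem Reach.single {m : ℕ} {x y : X} (h : E x y m) : Reach E m x y := by
  simpa using Reach.step h (Reach.refl y)

theorem Reach.symm (hE : ∀ x y m, E x y m → E y x m) {m : ℕ} {x y : X}
    (h : Reach E m x y) : Reach E m y x := by
  induction h with
  | refl x => exact Reach.refl x
  | step e _ ih => rw [Nat.add_comm]; exact ih.trans (Reach.single (hE _ _ _ e))

theorem Reach.eq_of_zero (hE : ∀ x y m, E x y m → 1 ≤ m) {m : ℕ} {x y : X}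
    (h : Reach E m x y) (hm : m = 0) : x = y := by
  induction h with
  | refl x => rfl
  | step e _ ih => have := hE _ _ _ e; omega

end ReachAux

theorem ncard_biUnion_le' {ι α : Type*} (s : Finset ι) (f : ι → Set α)
    (h : ∀ i ∈ s, (f i).Finite) :
    (⋃ i ∈ s, f i).ncard ≤ ∑ i ∈ s, (f i).ncard := by
  classical
  induction s using Finset.induction with
  | empty => simp
  | @insert a s hx ih =>
    rw [Finset.set_biUnion_insert, Finset.sum_insert hx]
    exact le_trans (Set.ncard_union_le _ _)
      (by gcongr; exact ih fun i hi => h i (Finset.mem_insert_of_mem hi))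

/-- The set of points reachable from `x` by products of at most `n` elements of `S`. -/
def orbitSet {G X : Type*} [Group G] [MulAction G X] (S : Finset G) (x : X) (n : ℕ) : Set X :=
  {y | ∃ l : List G, l.length ≤ n ∧ (∀ g ∈ l, g ∈ S) ∧ l.prod • x = y}

section OrbitAux
variable {G X : Type*} [Group G] [MulAction G X] (S : Finset G) (x : X)

theorem orbitSet_mono {m n : ℕ} (h : m ≤ n) : orbitSet S x m ⊆ orbitSet S x n :=
  fun _ ⟨l, hl, hS, hp⟩ => ⟨l, hl.trans h, hS, hp⟩

theorem self_mem_orbitSet (n : ℕ) : x ∈ orbitSet S x n :=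
  ⟨[], by simp, by simp, by simp⟩

theorem orbitSet_finite
    (h : Tendsto (fun n : ℕ => (Nat.card (orbitSet S x n) : ℝ) ^ (1 / (n : ℝ))) atTop (nhds 1))
    (n : ℕ) : (orbitSet S x n).Finite := by
  by_contra hinf
  have hev : ∀ᶠ m : ℕ in atTop,
      (Nat.card (orbitSet S x m) : ℝ) ^ (1 / (m : ℝ)) = 0 := by
    filter_upwards [eventually_ge_atTop n, eventually_ge_atTop 1] with m hm hm1
    have : (orbitSet S x m).Infinite := Set.Infinite.mono (orbitSet_mono S x hm) hinf
    haveI := this.to_subtype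
    rw [Nat.card_eq_zero_of_infinite]
    push_cast
    rw [Real.zero_rpow]
    positivity
  exact one_ne_zero (tendsto_nhds_unique (h.congr' hev) tendsto_const_nhds)

end OrbitAux

theorem exists_metric_subexp_bounded_displacement
    {G X : Type*} [Group G] [MulAction G X] [Countable G] [Countable X]
    (hsub : ∀ (S : Finset G) (x : X),
      Tendsto (fun n : ℕ => (Nat.card (orbitSet S x n) : ℝ) ^ (1 / (n : ℝ))) atTop (nhds 1)) :
    ∃ d : X → X → ℕ,
      (∀ x y, d x y = 0 ↔ x = y) ∧
      (∀ x y, d x y = d y x) ∧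
      (∀ x y z, d x z ≤ d x y + d y z) ∧
      (∀ (x₀ : X) (n : ℕ), {y : X | d x₀ y ≤ n}.Finite) ∧
      (∀ x₀ : X, Tendsto
        (fun n : ℕ => (Nat.card {y : X | d x₀ y ≤ n} : ℝ) ^ (1 / (n : ℝ))) atTop (nhds 1)) ∧
      (∀ g : G, ∃ c : ℕ, ∀ x : X, d x (g • x) ≤ c) := by
  classical
  rcases isEmpty_or_nonempty X with hX | hX
  · refine ⟨fun _ _ => 0, fun x => hX.elim x, fun x => hX.elim x, fun x => hX.elim x,
      fun x _ => (Set.subsingleton_of_subsingleton).finite, fun x => hX.elim x,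
      fun g => ⟨0, fun x => hX.elim x⟩⟩
  obtain ⟨f, hf⟩ := exists_surjective_nat G
  obtain ⟨e, he⟩ := exists_surjective_nat X
  set S : ℕ → Finset G := fun i =>
    (Finset.range (i+1)).image f ∪ (Finset.range (i+1)).image (fun k => (f k)⁻¹) with hSdef
  -- choice of thresholds
  have hNex : ∀ i : ℕ, ∃ N : ℕ, ∀ j ≤ i, ∀ n ≥ N,
      (Nat.card (orbitSet (S i) (e j) n) : ℝ) ≤ Real.exp (n / (i+1)) := by
    intro i
    have hev : ∀ᶠ n : ℕ in atTop, ∀ j ∈ Finset.range (i+1),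
        (Nat.card (orbitSet (S i) (e j) n) : ℝ) ≤ Real.exp (n / (i+1)) := by
      rw [eventually_all_finset]
      intro j _
      have h1 : (1:ℝ) < Real.exp (1/((i:ℝ)+1)) := by
        rw [Real.one_lt_exp_iff]; positivity
      have h2 := (hsub (S i) (e j)).eventually (eventually_le_nhds h1)
      filter_upwards [h2, eventually_ge_atTop 1] with n hn hn1
      have hn0 : (n:ℝ) ≠ 0 := by
        have : (0:ℝ) < n := by exact_mod_cast hn1
        positivity
      have hc : (0:ℝ) ≤ (Nat.card (orbitSet (S i) (e j) n) : ℝ) := Nat.cast_nonneg _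
      have h3 := Real.rpow_le_rpow (Real.rpow_nonneg hc _) hn (Nat.cast_nonneg n)
      calc (Nat.card (orbitSet (S i) (e j) n) : ℝ)
          = (Nat.card (orbitSet (S i) (e j) n) : ℝ) ^ ((1/(n:ℝ)) * (n:ℝ)) := by
            rw [one_div_mul_cancel hn0, Real.rpow_one]
        _ = ((Nat.card (orbitSet (S i) (e j) n) : ℝ) ^ (1/(n:ℝ))) ^ (n:ℝ) :=
            Real.rpow_mul hc _ _
        _ ≤ (Real.exp (1/((i:ℝ)+1))) ^ (n:ℝ) := h3
        _ = Real.exp ((1/((i:ℝ)+1)) * (n:ℝ)) := (Real.exp_mul _ _).symm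
        _ = Real.exp ((n:ℝ) / ((i:ℝ)+1)) := by ring_nf
    obtain ⟨Nv, hNv⟩ := eventually_atTop.mp hev
    exact ⟨Nv, fun j hj n hn => hNv n hn j (Finset.mem_range.mpr (by omega))⟩
  choose N hN using hNex
  set base : ℕ → ℕ := fun i => max (max (N i) ((i+1) * ⌈Real.log (i+2)⌉₊)) (i+1) with hbase
  set T : ℕ → ℕ := fun i => i + (Finset.range (i+1)).sup base with hT
  have hTbase : ∀ i, base i ≤ T i := fun i =>
    le_add_of_le_right (Finset.le_sup (Finset.self_mem_range_succ i))
  have hTgt : ∀ i, i < T i := by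
    intro i
    have h1 : i + 1 ≤ base i := le_max_right _ _
    have h2 := hTbase i
    omega
  have hTmono : StrictMono T := by
    intro a b hab
    have : (Finset.range (a+1)).sup base ≤ (Finset.range (b+1)).sup base :=
      Finset.sup_mono (by intro k hk; simp at hk ⊢; omega)
    simp only [hT]; omega
  -- edge relation
  set E : X → X → ℕ → Prop := fun x y m =>
    (∃ k, (f k • x = y ∨ f k • y = x) ∧ m = T k) ∨
    (∃ k, ((x = e k ∧ y = e (k+1)) ∨ (y = e k ∧ x = e (k+1))) ∧ m = T (k+1)) with hE
  have hEsymm : ∀ x y m, E x y m → E y x m := by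
    rintro x y m (⟨k, hk, rfl⟩ | ⟨k, hk, rfl⟩)
    · exact Or.inl ⟨k, hk.symm, rfl⟩
    · exact Or.inr ⟨k, hk.symm, rfl⟩
  have hEpos : ∀ x y m, E x y m → 1 ≤ m := by
    rintro x y m (⟨k, hk, rfl⟩ | ⟨k, hk, rfl⟩)
    · have := hTgt k; omega
    · have := hTgt (k+1); omega
  -- connectivity
  have hchain : ∀ a : ℕ, ∃ m, Reach E m (e 0) (e a) := by
    intro a
    induction a with
    | zero => exact ⟨0, Reach.refl _⟩
    | succ a ih =>
      obtain ⟨m, hm⟩ := ih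
      exact ⟨m + T (a+1), hm.trans (Reach.single (Or.inr ⟨a, Or.inl ⟨rfl, rfl⟩, rfl⟩))⟩
  have hconn : ∀ x y : X, ∃ m, Reach E m x y := by
    intro x y
    obtain ⟨a, rfl⟩ := he x
    obtain ⟨b, rfl⟩ := he y
    obtain ⟨m₁, h₁⟩ := hchain a
    obtain ⟨m₂, h₂⟩ := hchain b
    exact ⟨m₁ + m₂, (h₁.symm hEsymm).trans h₂⟩
  set d : X → X → ℕ := fun x y => sInf {n | ∃ m ≤ n, Reach E m x y} with hd
  have hne : ∀ x y, {n | ∃ m ≤ n, Reach E m x y}.Nonempty := by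
    intro x y
    obtain ⟨m, hm⟩ := hconn x y
    exact ⟨m, m, le_refl m, hm⟩
  have hdle : ∀ x y n, d x y ≤ n ↔ ∃ m ≤ n, Reach E m x y := by
    intro x y n
    constructor
    · intro h
      obtain ⟨m, hm, hr⟩ := Nat.sInf_mem (hne x y)
      exact ⟨m, hm.trans h, hr⟩
    · intro ⟨m, hm, hr⟩
      exact Nat.sInf_le ⟨m, hm, hr⟩
  have key : ∀ (m : ℕ) (x y : X), Reach E m x y → ∀ i n, m ≤ n → (∀ k, T k ≤ n → k ≤ i) →
      y ∈ (⋃ j ∈ Finset.range (i+1), orbitSet (S i) (e j) n) ∪ orbitSet (S i) x m := by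
    intro m x y h
    induction h with
    | refl x => intro i n _ _; exact Or.inr (self_mem_orbitSet _ _ _)
    | @step x z y' w m' e₁ hr ih =>
      intro i n hmn hk
      have hw1 : 1 ≤ w := hEpos _ _ _ e₁
      rcases ih i n (by omega) hk with hy | hy
      · exact Or.inl hy
      rcases e₁ with ⟨k, hk', hw⟩ | ⟨k, hk', hw⟩
      · -- group edge
        have hki : k ≤ i := hk k (by omega)
        obtain ⟨l, hl, hls, hlp⟩ := hy
        refine Or.inr ?_
        rcases hk' with h' | h'
        · refine ⟨l ++ [f k], ?_, ?_, ?_⟩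
          · simp only [List.length_append, List.length_singleton]; omega
          · intro g hg
            rcases List.mem_append.mp hg with hg | hg
            · exact hls g hg
            · simp only [List.mem_singleton] at hg; subst hg
              exact Finset.mem_union_left _
                (Finset.mem_image.mpr ⟨k, Finset.mem_range.mpr (by omega), rfl⟩)
          · rw [List.prod_append, List.prod_singleton, mul_smul, h', hlp]
        · refine ⟨l ++ [(f k)⁻¹], ?_, ?_, ?_⟩
          · simp only [List.length_append, List.length_singleton]; omega
          · intro g hg
            rcases List.mem_append.mp hg with hg | hg
            · exact hls g hg
            · simp only [List.mem_singleton] at hg; subst hg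
              exact Finset.mem_union_right _
                (Finset.mem_image.mpr ⟨k, Finset.mem_range.mpr (by omega), rfl⟩)
          · rw [List.prod_append, List.prod_singleton, mul_smul, ← h', inv_smul_smul, hlp]
      · -- chain edge
        have hki : k + 1 ≤ i := hk (k+1) (by omega)
        refine Or.inl ?_
        rcases hk' with ⟨h1, h2⟩ | ⟨h1, h2⟩
        · refine Set.mem_biUnion (Finset.mem_range.mpr (by omega : k + 1 < i + 1)) ?_
          rw [h2] at hy
          exact orbitSet_mono _ _ (by omega : m' ≤ n) hy
        · refine Set.mem_biUnion (Finset.mem_range.mpr (by omega : k < i + 1)) ?_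
          rw [h1] at hy
          exact orbitSet_mono _ _ (by omega : m' ≤ n) hy
  set I : ℕ → ℕ := fun n => Nat.findGreatest (fun i => T i ≤ n) n with hIdef
  have hIk : ∀ n k, T k ≤ n → k ≤ I n := fun n k hk =>
    Nat.le_findGreatest (le_trans (hTgt k).le hk) hk
  have ofin : ∀ (Sf : Finset G) (x : X) (n : ℕ), (orbitSet Sf x n).Finite :=
    fun Sf x n => orbitSet_finite Sf x (hsub Sf x) n
  have ballsub : ∀ (x₀ : X) (n : ℕ), {y | d x₀ y ≤ n} ⊆
      (⋃ j ∈ Finset.range (I n + 1), orbitSet (S (I n)) (e j) n) ∪ orbitSet (S (I n)) x₀ n := by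
    intro x₀ n y hy
    obtain ⟨m, hm, hr⟩ := (hdle x₀ y n).mp hy
    rcases key m x₀ y hr (I n) n hm (fun k hk => hIk n k hk) with h | h
    · exact Or.inl h
    · exact Or.inr (orbitSet_mono _ _ hm h)
  have ballfin : ∀ (x₀ : X) (n : ℕ), {y : X | d x₀ y ≤ n}.Finite := by
    intro x₀ n
    refine Set.Finite.subset (Set.Finite.union ?_ (ofin _ _ _)) (ballsub x₀ n)
    exact (Finset.range (I n + 1)).finite_toSet.biUnion fun j _ => ofin _ _ _
  refine ⟨d, ?_, ?_, ?_, ?_, ?_, ?_⟩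
  · -- d x y = 0 ↔ x = y
    intro x y
    constructor
    · intro h
      obtain ⟨m, hm, hr⟩ := (hdle x y 0).mp h.le
      exact hr.eq_of_zero hEpos (Nat.le_zero.mp hm)
    · rintro rfl
      exact Nat.le_zero.mp ((hdle x x 0).mpr ⟨0, le_refl 0, Reach.refl x⟩)
  · -- symmetry
    intro x y
    have : ∀ a b : X, d a b ≤ d b a := by
      intro a b
      obtain ⟨m, hm, hr⟩ := Nat.sInf_mem (hne b a)
      exact (hdle a b _).mpr ⟨m, hm, hr.symm hEsymm⟩
    exact le_antisymm (this x y) (this y x)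
  · -- triangle
    intro x y z
    obtain ⟨m₁, hm₁, hr₁⟩ := Nat.sInf_mem (hne x y)
    obtain ⟨m₂, hm₂, hr₂⟩ := Nat.sInf_mem (hne y z)
    exact (hdle x z _).mpr ⟨m₁ + m₂, Nat.add_le_add hm₁ hm₂, hr₁.trans hr₂⟩
  · -- balls finite
    exact ballfin
  · -- subexponential growth
    intro x₀
    obtain ⟨j₀, rfl⟩ := he x₀
    have hlow : ∀ n : ℕ, (1:ℝ) ≤ (Nat.card {y : X | d (e j₀) y ≤ n} : ℝ) ^ (1/(n:ℝ)) := by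
      intro n
      haveI := (ballfin (e j₀) n).to_subtype
      haveI : Nonempty {y : X | d (e j₀) y ≤ n} :=
        ⟨⟨e j₀, (hdle _ _ n).mpr ⟨0, Nat.zero_le n, Reach.refl _⟩⟩⟩
      have h1 : 1 ≤ Nat.card {y : X | d (e j₀) y ≤ n} := Nat.card_pos
      calc (1:ℝ) = (1:ℝ) ^ (1/(n:ℝ)) := (Real.one_rpow _).symm
        _ ≤ _ := Real.rpow_le_rpow zero_le_one (by exact_mod_cast h1) (by positivity)
    have hO : ∀ n, ∀ j ≤ I n, N (I n) ≤ n →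
        ((orbitSet (S (I n)) (e j) n).ncard : ℝ) ≤ Real.exp ((n:ℝ)/((I n : ℝ)+1)) := by
      intro n j hj hNn
      rw [← Nat.card_coe_set_eq]
      exact hN (I n) j hj n hNn
    have hupper : ∀ᶠ n : ℕ in atTop, (Nat.card {y : X | d (e j₀) y ≤ n} : ℝ) ^ (1/(n:ℝ))
        ≤ Real.exp (2/((I n : ℝ)+1)) := by
      filter_upwards [eventually_ge_atTop (T j₀), eventually_ge_atTop (T 0),
        eventually_ge_atTop 1] with n hnj hn0 hn1
      have hn0' : (0:ℝ) < (n:ℝ) := by exact_mod_cast hn1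
      have hTi : T (I n) ≤ n :=
        Nat.findGreatest_spec (P := fun i => T i ≤ n) (Nat.zero_le n) hn0
      have hNi : N (I n) ≤ n :=
        le_trans (le_trans ((le_max_left _ _).trans (le_max_left _ _)) (hTbase (I n))) hTi
      have hj₀i : j₀ ≤ I n := hIk n j₀ hnj
      have hipos : (0:ℝ) < (I n : ℝ) + 1 := by positivity
      -- cardinality bound
      have s1 : {y : X | d (e j₀) y ≤ n}.ncard ≤
          (⋃ j ∈ Finset.range (I n + 1), orbitSet (S (I n)) (e j) n).ncard
            + (orbitSet (S (I n)) (e j₀) n).ncard := by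
        refine le_trans (Set.ncard_le_ncard (ballsub (e j₀) n) ?_) (Set.ncard_union_le _ _)
        exact Set.Finite.union
          ((Finset.range (I n + 1)).finite_toSet.biUnion fun j _ => ofin _ _ _) (ofin _ _ _)
      have s2 : (⋃ j ∈ Finset.range (I n + 1), orbitSet (S (I n)) (e j) n).ncard ≤
          ∑ j ∈ Finset.range (I n + 1), (orbitSet (S (I n)) (e j) n).ncard :=
        ncard_biUnion_le' _ _ (fun j _ => ofin _ _ _)
      have s3 : (∑ j ∈ Finset.range (I n + 1), ((orbitSet (S (I n)) (e j) n).ncard : ℝ)) ≤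
          ((I n : ℝ)+1) * Real.exp ((n:ℝ)/((I n : ℝ)+1)) := by
        have := Finset.sum_le_card_nsmul (Finset.range (I n + 1))
          (fun j => ((orbitSet (S (I n)) (e j) n).ncard : ℝ)) (Real.exp ((n:ℝ)/((I n : ℝ)+1)))
          (fun j hj => hO n j (Nat.lt_succ_iff.mp (Finset.mem_range.mp hj)) hNi)
        rw [Finset.card_range] at this
        calc (∑ j ∈ Finset.range (I n + 1), ((orbitSet (S (I n)) (e j) n).ncard : ℝ))
            ≤ (I n + 1) • Real.exp ((n:ℝ)/((I n : ℝ)+1)) := this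
          _ = ((I n : ℝ)+1) * Real.exp ((n:ℝ)/((I n : ℝ)+1)) := by
              rw [nsmul_eq_mul]; push_cast; ring
      have hcard : (Nat.card {y : X | d (e j₀) y ≤ n} : ℝ) ≤
          ((I n : ℝ)+2) * Real.exp ((n:ℝ)/((I n : ℝ)+1)) := by
        rw [Nat.card_coe_set_eq]
        have c1 : ({y : X | d (e j₀) y ≤ n}.ncard : ℝ) ≤
            (∑ j ∈ Finset.range (I n + 1), ((orbitSet (S (I n)) (e j) n).ncard : ℝ))
              + ((orbitSet (S (I n)) (e j₀) n).ncard : ℝ) := by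
          exact_mod_cast s1.trans (Nat.add_le_add_right s2 _)
        refine le_trans c1 ?_
        have c2 := hO n j₀ hj₀i hNi
        calc (∑ j ∈ Finset.range (I n + 1), ((orbitSet (S (I n)) (e j) n).ncard : ℝ))
              + ((orbitSet (S (I n)) (e j₀) n).ncard : ℝ)
            ≤ ((I n : ℝ)+1) * Real.exp ((n:ℝ)/((I n : ℝ)+1))
              + Real.exp ((n:ℝ)/((I n : ℝ)+1)) := add_le_add s3 c2
          _ = ((I n : ℝ)+2) * Real.exp ((n:ℝ)/((I n : ℝ)+1)) := by ring
      -- (I n + 2) ≤ exp(n/(I n + 1))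
      have hlog : ((I n : ℝ)+2) ≤ Real.exp ((n:ℝ)/((I n : ℝ)+1)) := by
        have h2 : (I n + 1) * ⌈Real.log ((I n : ℝ)+2)⌉₊ ≤ n :=
          le_trans (le_trans ((le_max_right _ _).trans (le_max_left _ _)) (hTbase (I n))) hTi
        have h1 : Real.log ((I n : ℝ)+2) ≤ (n:ℝ)/((I n : ℝ)+1) := by
          rw [le_div_iff₀ hipos]
          calc Real.log ((I n : ℝ)+2) * ((I n : ℝ)+1)
              ≤ (⌈Real.log ((I n : ℝ)+2)⌉₊ : ℝ) * ((I n : ℝ)+1) :=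
                mul_le_mul_of_nonneg_right (Nat.le_ceil _) (by positivity)
            _ ≤ (n:ℝ) := by
                have h3 : (((I n + 1) * ⌈Real.log ((I n : ℝ)+2)⌉₊ : ℕ) : ℝ) ≤ (n:ℝ) := by
                  exact_mod_cast h2
                push_cast at h3
                nlinarith [h3]
        calc ((I n : ℝ)+2) = Real.exp (Real.log ((I n : ℝ)+2)) :=
              (Real.exp_log (by positivity)).symm
          _ ≤ _ := Real.exp_le_exp.mpr h1
      have hcard2 : (Nat.card {y : X | d (e j₀) y ≤ n} : ℝ) ≤
          Real.exp (2*(n:ℝ)/((I n : ℝ)+1)) := by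
        refine le_trans hcard ?_
        calc ((I n : ℝ)+2) * Real.exp ((n:ℝ)/((I n : ℝ)+1))
            ≤ Real.exp ((n:ℝ)/((I n : ℝ)+1)) * Real.exp ((n:ℝ)/((I n : ℝ)+1)) :=
              mul_le_mul_of_nonneg_right hlog (Real.exp_nonneg _)
          _ = Real.exp ((n:ℝ)/((I n : ℝ)+1) + (n:ℝ)/((I n : ℝ)+1)) := (Real.exp_add _ _).symm
          _ = Real.exp (2*(n:ℝ)/((I n : ℝ)+1)) := by ring_nf
      have h4 := Real.rpow_le_rpow (Nat.cast_nonneg _) hcard2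
        (by positivity : (0:ℝ) ≤ 1/(n:ℝ))
      refine le_trans h4 (le_of_eq ?_)
      rw [← Real.exp_mul]
      congr 1
      field_simp
    have hIat : Tendsto I atTop atTop :=
      tendsto_atTop.mpr fun b => eventually_atTop.mpr ⟨T b, fun n hn => hIk n b hn⟩
    have harg : Tendsto (fun n : ℕ => 2/((I n : ℝ)+1)) atTop (nhds 0) := by
      have h0 : Tendsto (fun m : ℕ => 2/((m:ℝ)+1)) atTop (nhds 0) :=
        tendsto_const_nhds.div_atTop
          (tendsto_atTop_add_const_right _ 1 tendsto_natCast_atTop_atTop)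
      exact h0.comp hIat
    have hup : Tendsto (fun n : ℕ => Real.exp (2/((I n : ℝ)+1))) atTop (nhds 1) := by
      have := (Real.continuous_exp.tendsto 0).comp harg
      simpa [Function.comp_def] using this
    exact tendsto_of_tendsto_of_tendsto_of_le_of_le' tendsto_const_nhds hup
      (Eventually.of_forall hlow) hupper
  · -- bounded displacement
    intro g
    obtain ⟨k, rfl⟩ := hf g
    refine ⟨T k, fun x => (hdle x (f k • x) (T k)).mpr
      ⟨T k, le_refl _, Reach.single (Or.inl ⟨k, Or.inl rfl, rfl⟩)⟩⟩
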